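/- For a fixed edge (u,v) appearing in agent a_i's path and a collection of existing fragments closed in the tables T_from and T_to, every new fragment involving a_i's traversal of (u,v) is of exactly one of four forms: a singleton fragment ((i),(j)); an existing fragment ending at u extended by a_i at the end; an existing fragment starting from v extended by a_i at the front; or the concatenation of an agent-disjoint pair of fragments, one ending at u and one starting from v, joined through a_i. -/

import Mathlib

open scoped Classical

/-- An OTIMAPP path set: `n` agents, agent `i` follows the path
`loc i 0, loc i 1, ..., loc i (L i)`; `loc i 0` is its start and `loc i (L i)` its goal. -/
structure OTI (V : Type) (n : ℕ) where
  L : Fin n → ℕ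
  loc : Fin n → ℕ → V

namespace OTI

variable {V : Type} {n : ℕ}

/-- Activation of agent `i` in configuration `c` (clocks): the agent advances iff it is not
at the end of its path and its next vertex is unoccupied. -/
noncomputable def step (P : OTI V n) (c : Fin n → ℕ) (i : Fin n) : Fin n → ℕ :=
  if c i < P.L i ∧ ∀ j, j ≠ i → P.loc j (c j) ≠ P.loc i (c i + 1)
  then Function.update c i (c i + 1) else c

/-- Configuration after the first `k` activations of execution `e`. -/
noncomputable def run (P : OTI V n) (e : ℕ → Fin n) : ℕ → Fin n → ℕ
  | 0 => fun _ => 0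
  | k + 1 => P.step (P.run e k) (e k)

/-- An execution is fair when every agent is activated infinitely often. -/
def Fair (e : ℕ → Fin n) : Prop := ∀ (i : Fin n) (k : ℕ), ∃ m, k ≤ m ∧ e m = i

/-- All agents reach their goals after finitely many activations. -/
def Terminates (P : OTI V n) (e : ℕ → Fin n) : Prop :=
  ∃ k, ∀ i, P.run e k i = P.L i

/-- A feasible OTIMAPP solution: every fair execution terminates. -/
def Feasible (P : OTI V n) : Prop := ∀ e, Fair e → P.Terminates e

/-- A configuration (assignment of clocks) is reachable by some execution. -/
def Reachable (P : OTI V n) (c : Fin n → ℕ) : Prop := ∃ e k, P.run e k = c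

/-- A potential cyclic deadlock: distinct agents `σ 0, …, σ k` with clock values `t`
such that each agent's next vertex is the next agent's current vertex, cyclically. -/
def PotentialCyclic (P : OTI V n) {k : ℕ} (σ : Fin (k + 1) → Fin n)
    (t : Fin (k + 1) → ℕ) : Prop :=
  Function.Injective σ ∧ (∀ m, t m < P.L (σ m)) ∧
    ∀ m, P.loc (σ m) (t m + 1) = P.loc (σ (m + 1)) (t (m + 1))

/-- A reachable cyclic deadlock: a potential cyclic deadlock whose clock values are realized
by some reachable configuration. -/
def ReachableCyclic (P : OTI V n) {k : ℕ} (σ : Fin (k + 1) → Fin n)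
    (t : Fin (k + 1) → ℕ) : Prop :=
  P.PotentialCyclic σ t ∧ ∃ c, P.Reachable c ∧ ∀ m, c (σ m) = t m

/-- A potential terminal deadlock `(i, j, tj)`: agent `i`'s goal lies on `j`'s path. -/
def PotentialTerminal (P : OTI V n) (i j : Fin n) (tj : ℕ) : Prop :=
  i ≠ j ∧ tj ≤ P.L j ∧ P.loc i (P.L i) = P.loc j tj

/-- A reachable terminal deadlock: some execution puts `i` at its goal and `j` at clock `tj - 1`. -/
def ReachableTerminal (P : OTI V n) (i j : Fin n) (tj : ℕ) : Prop :=
  P.PotentialTerminal i j tj ∧ ∃ c, P.Reachable c ∧ c i = P.L i ∧ c j + 1 = tj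

/-- The path set is a set of paths on graph `G` with starts `s` and goals `g`. -/
def OnGraph (P : OTI V n) (G : SimpleGraph V) (s g : Fin n → V) : Prop :=
  (∀ i, P.loc i 0 = s i) ∧ (∀ i, P.loc i (P.L i) = g i) ∧
    ∀ i t, t < P.L i → G.Adj (P.loc i t) (P.loc i (t + 1))

/-- A fragment: a nonempty chain of (agent, clock) pairs with distinct agents, where each
agent's next vertex equals the next agent's current vertex. -/
def IsFragment (P : OTI V n) (l : List (Fin n × ℕ)) : Prop :=
  l ≠ [] ∧ (l.map Prod.fst).Nodup ∧ (∀ p ∈ l, p.2 < P.L p.1) ∧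
    l.Chain' fun p q => P.loc p.1 (p.2 + 1) = P.loc q.1 q.2

/-- The vertex a fragment starts from. -/
def fragStart (P : OTI V n) (l : List (Fin n × ℕ)) : Option V :=
  l.head?.map fun p => P.loc p.1 p.2

/-- The vertex a fragment ends at. -/
def fragEnd (P : OTI V n) (l : List (Fin n × ℕ)) : Option V :=
  l.getLast?.map fun p => P.loc p.1 (p.2 + 1)

end OTI

/-- any fragment containing agent `i`'s traversal of the edge
`(π_i[j], π_i[j+1])` is of exactly one of four forms: the singleton `((i),(j))`;
a fragment ending at `π_i[j]` extended by `a_i` at the end; a fragment starting from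
`π_i[j+1]` extended by `a_i` at the front; or an agent-disjoint pair of such fragments
joined through `a_i`. -/
theorem fragment_four_forms {V : Type} {n : ℕ} (P : OTI V n) (i : Fin n) (j : ℕ)
    (l : List (Fin n × ℕ)) (hl : P.IsFragment l) (hmem : (i, j) ∈ l) :
    l = [(i, j)] ∨
    (∃ l1, l1 ≠ [] ∧ l = l1 ++ [(i, j)] ∧ P.IsFragment l1 ∧
      P.fragEnd l1 = some (P.loc i j) ∧ ∀ p ∈ l1, p.1 ≠ i) ∨
    (∃ l2, l2 ≠ [] ∧ l = (i, j) :: l2 ∧ P.IsFragment l2 ∧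
      P.fragStart l2 = some (P.loc i (j + 1)) ∧ ∀ p ∈ l2, p.1 ≠ i) ∨
    (∃ l1 l2, l1 ≠ [] ∧ l2 ≠ [] ∧ l = l1 ++ (i, j) :: l2 ∧
      P.IsFragment l1 ∧ P.IsFragment l2 ∧
      P.fragEnd l1 = some (P.loc i j) ∧ P.fragStart l2 = some (P.loc i (j + 1)) ∧
      (∀ p ∈ l1, p.1 ≠ i) ∧ (∀ p ∈ l2, p.1 ≠ i) ∧
      ∀ p ∈ l1, ∀ q ∈ l2, p.1 ≠ q.1) := by
  classical
  obtain ⟨l1, l2, rfl⟩ := List.append_of_mem hmem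
  obtain ⟨hne, hnodup, hlt, hchain⟩ := hl
  rw [List.map_append, List.nodup_append] at hnodup
  obtain ⟨hn1, hn2, hdisj⟩ := hnodup
  rw [List.Chain', List.isChain_append] at hchain
  obtain ⟨hc1, hc2, hlink⟩ := hchain
  have hi1 : ∀ p ∈ l1, p.1 ≠ i := by
    intro p hp he
    exact hdisj _ (List.mem_map_of_mem hp) _ (by simp [he]) rfl
  have hn2' : (i :: l2.map Prod.fst).Nodup := by simpa using hn2
  have hi2 : ∀ p ∈ l2, p.1 ≠ i := by
    intro p hp he
    exact (List.nodup_cons.mp hn2').1 (he ▸ List.mem_map_of_mem hp)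
  have hpq : ∀ p ∈ l1, ∀ q ∈ l2, p.1 ≠ q.1 := by
    intro p hp q hq he
    exact hdisj _ (List.mem_map_of_mem hp) _
      (by simp only [List.map_cons, List.mem_cons]; right
          exact he ▸ List.mem_map_of_mem hq) rfl
  have hfrag1 : l1 ≠ [] → P.IsFragment l1 := by
    intro h1
    exact ⟨h1, hn1, fun p hp => hlt p (by simp [hp]), hc1⟩
  have hfrag2 : l2 ≠ [] → P.IsFragment l2 := by
    intro h2
    refine ⟨h2, (List.nodup_cons.mp hn2').2,
      fun p hp => hlt p (by simp [hp]), hc2.tail⟩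
  have hend1 : l1 ≠ [] → P.fragEnd l1 = some (P.loc i j) := by
    intro h1
    have hx := List.getLast?_eq_getLast (l := l1) h1
    have := hlink (l1.getLast h1) (by rw [hx]; exact rfl) (i, j) rfl
    simp [OTI.fragEnd, hx, this]
  have hstart2 : ∀ q l2', l2 = q :: l2' → P.fragStart l2 = some (P.loc i (j + 1)) := by
    intro q l2' h2
    subst h2
    have := (List.isChain_cons_cons.mp hc2).1
    simp [OTI.fragStart, ← this]
  rcases l1 with _ | ⟨p, l1'⟩ <;> rcases hl2 : l2 with _ | ⟨q, l2'⟩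
  · left; rfl
  · right; right; left
    subst hl2
    exact ⟨q :: l2', by simp, by simp, hfrag2 (by simp), hstart2 q l2' rfl,
      fun p hp => hi2 p hp⟩
  · right; left
    subst hl2
    refine ⟨p :: l1', by simp, by simp, hfrag1 (by simp), hend1 (by simp),
      fun r hr => hi1 r hr⟩
  · right; right; right
    subst hl2
    exact ⟨p :: l1', q :: l2', by simp, by simp, rfl, hfrag1 (by simp),
      hfrag2 (by simp), hend1 (by simp), hstart2 q l2' rfl,
      fun r hr => hi1 r hr, fun r hr => hi2 r hr, hpq⟩
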